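/- The map sending the class of u ∈ ℤ^n in the cokernel of ρ(s) - id : ℤ^n → ℤ^n to the conjugacy class of the cyclic subgroup of Γ generated by the element (u, s) is a well-defined bijection from coker(ρ(s) - id) onto the set 𝒫 of conjugacy classes of nontrivial finite subgroups of Γ. -/

import Mathlib

open Multiplicative

/-- The action of `GL n ℤ` on `ℤⁿ`, as a homomorphism
`Multiplicative (ZMod p) →* MulAut (Multiplicative (Fin n → ℤ))`. -/
def matAutHom {p n : ℕ} (ρ : Multiplicative (ZMod p) →* Matrix.GeneralLinearGroup (Fin n) ℤ) :
    Multiplicative (ZMod p) →* MulAut (Multiplicative (Fin n → ℤ)) where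
  toFun g :=
    { toFun := fun v => Multiplicative.ofAdd ((ρ g : Matrix (Fin n) (Fin n) ℤ).mulVec v.toAdd)
      invFun := fun v =>
        Multiplicative.ofAdd ((((ρ g)⁻¹ : Matrix.GeneralLinearGroup (Fin n) ℤ) :
          Matrix (Fin n) (Fin n) ℤ).mulVec v.toAdd)
      left_inv := fun v => by simp [Matrix.mulVec_mulVec]
      right_inv := fun v => by simp [Matrix.mulVec_mulVec]
      map_mul' := fun u v => by simp [Matrix.mulVec_add] }
  map_one' := by ext v; simp
  map_mul' g h := by ext v; simp [Matrix.mulVec_mulVec]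

/-- The group `Γ = ℤⁿ ⋊_ρ ℤ/p`. -/
abbrev Gamma {p n : ℕ} (ρ : Multiplicative (ZMod p) →* Matrix.GeneralLinearGroup (Fin n) ℤ) :
    Type :=
  SemidirectProduct (Multiplicative (Fin n → ℤ)) (Multiplicative (ZMod p)) (matAutHom ρ)

/-- Two subgroups of a group are conjugate. -/
def ConjSub {G : Type*} [Group G] (P Q : Subgroup G) : Prop :=
  ∃ γ : G, Subgroup.map (MulAut.conj γ).toMonoidHom P = Q

namespace GammaAux

variable {p n : ℕ} {ρ : Multiplicative (ZMod p) →* Matrix.GeneralLinearGroup (Fin n) ℤ}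

lemma mk_mul (a c : Fin n → ℤ) (b d : ZMod p) :
    (⟨ofAdd a, ofAdd b⟩ : Gamma ρ) * ⟨ofAdd c, ofAdd d⟩ =
      ⟨ofAdd (a + (ρ (ofAdd b) : Matrix (Fin n) (Fin n) ℤ).mulVec c), ofAdd (b + d)⟩ := rfl

lemma mk_inv (a : Fin n → ℤ) (b : ZMod p) :
    (⟨ofAdd a, ofAdd b⟩ : Gamma ρ)⁻¹ =
      ⟨ofAdd ((ρ (ofAdd (-b)) : Matrix (Fin n) (Fin n) ℤ).mulVec (-a)), ofAdd (-b)⟩ := rfl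

lemma gamma_ext (x : Gamma ρ) (a : Fin n → ℤ) (b : ZMod p)
    (h1 : x.left.toAdd = a) (h2 : x.right.toAdd = b) : x = ⟨ofAdd a, ofAdd b⟩ := by
  cases x; subst h1 h2; rfl

lemma conj_mk (γ : Gamma ρ) (u : Fin n → ℤ) (s : ZMod p) :
    (MulAut.conj γ) (⟨ofAdd u, ofAdd s⟩ : Gamma ρ) =
      ⟨ofAdd (γ.left.toAdd + (ρ γ.right : Matrix (Fin n) (Fin n) ℤ).mulVec u
          - (ρ (ofAdd s) : Matrix (Fin n) (Fin n) ℤ).mulVec γ.left.toAdd), ofAdd s⟩ := by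
  obtain ⟨l, r⟩ := γ
  rw [MulAut.conj_apply]
  rw [show (⟨l, r⟩ : Gamma ρ) = ⟨ofAdd l.toAdd, ofAdd r.toAdd⟩ from rfl]
  rw [mk_mul, mk_inv, mk_mul]
  have hgrp : ρ r * ρ (ofAdd s) * (ρ r)⁻¹ = ρ (ofAdd s) := by
    rw [← map_mul, ← map_inv, ← map_mul, mul_comm r (ofAdd s), mul_inv_cancel_right]
  have hc : (ρ r : Matrix (Fin n) (Fin n) ℤ) * (ρ (ofAdd s) : Matrix (Fin n) (Fin n) ℤ) *
      ((ρ r : Matrix (Fin n) (Fin n) ℤ))⁻¹ = ↑(ρ (ofAdd s)) := by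
    have h := congrArg Units.val hgrp
    simpa [Matrix.coe_units_inv] using h
  apply gamma_ext <;>
    simp [Matrix.mulVec_mulVec, Matrix.mulVec_add, Matrix.mulVec_neg, hc, sub_eq_add_neg]

lemma conj_mk' (w u : Fin n → ℤ) (t s : ZMod p) :
    (MulAut.conj (⟨ofAdd w, ofAdd t⟩ : Gamma ρ)) (⟨ofAdd u, ofAdd s⟩ : Gamma ρ) =
      ⟨ofAdd (w + (ρ (ofAdd t) : Matrix (Fin n) (Fin n) ℤ).mulVec u
          - (ρ (ofAdd s) : Matrix (Fin n) (Fin n) ℤ).mulVec w), ofAdd s⟩ :=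
  conj_mk _ u s

lemma right_pow (x : Gamma ρ) (k : ℕ) : (x ^ k).right = x.right ^ k := by
  have := map_pow (SemidirectProduct.rightHom (φ := matAutHom ρ)) x k
  simpa [SemidirectProduct.rightHom_eq_right] using this

lemma right_zpow (x : Gamma ρ) (k : ℤ) : (x ^ k).right = x.right ^ k := by
  have := map_zpow (SemidirectProduct.rightHom (φ := matAutHom ρ)) x k
  simpa [SemidirectProduct.rightHom_eq_right] using this

lemma left_pow_of_right_one (x : Gamma ρ) (h : x.right = 1) (k : ℕ) :
    (x ^ k).left = x.left ^ k := by
  induction k with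
  | zero => simp
  | succ k ih =>
    rw [pow_succ, SemidirectProduct.mul_left, ih, right_pow, h, one_pow, map_one, pow_succ]
    rfl

lemma s_ne_zero (hp : p.Prime) {s : ZMod p} (hs : addOrderOf s = p) : s ≠ 0 := by
  rintro rfl
  rw [addOrderOf_zero] at hs
  exact hp.one_lt.ne hs

/-- `(u, s) ^ p = 1`. -/
lemma elem_pow_p (hp : p.Prime)
    (hfree : ∀ g : Multiplicative (ZMod p), g ≠ 1 → ∀ v : Fin n → ℤ,
      (ρ g : Matrix (Fin n) (Fin n) ℤ).mulVec v = v → v = 0)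
    {s : ZMod p} (hs : addOrderOf s = p) (v : Fin n → ℤ) :
    (⟨ofAdd v, ofAdd s⟩ : Gamma ρ) ^ p = 1 := by
  set x : Gamma ρ := ⟨ofAdd v, ofAdd s⟩ with hx
  have hr : (x ^ p).right = 1 := by
    rw [right_pow]
    show ofAdd s ^ p = 1
    have hdvd : addOrderOf s ∣ p := by rw [hs]
    have h0 : p • s = 0 := addOrderOf_dvd_iff_nsmul_eq_zero.mp hdvd
    rw [← ofAdd_nsmul, h0]
    rfl
  have hcomm : x * x ^ p = x ^ p * x := (Commute.refl x).pow_right p |>.eq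
  have hleft := congrArg SemidirectProduct.left hcomm
  rw [SemidirectProduct.mul_left, SemidirectProduct.mul_left, hr, map_one] at hleft
  set m := (x ^ p).left.toAdd with hm
  have hfix : (ρ (ofAdd s) : Matrix (Fin n) (Fin n) ℤ).mulVec m = m := by
    have h2 : v + (ρ (ofAdd s) : Matrix (Fin n) (Fin n) ℤ).mulVec m = m + v := by
      have := congrArg Multiplicative.toAdd hleft
      have e1 : x.left.toAdd = v := rfl
      have e2 : x.right = ofAdd s := rfl
      simp [matAutHom] at this
      rw [e1, e2] at this
      exact this
    have := h2.trans (add_comm m v)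
    exact add_left_cancel this
  have hm0 : m = 0 := by
    refine hfree (ofAdd s) ?_ m hfix
    simp only [ne_eq, ofAdd_eq_one]
    exact s_ne_zero hp hs
  have := gamma_ext (x ^ p) 0 0 hm0 (by rw [hr]; rfl)
  rw [this]; rfl

lemma exists_nsmul (hp : p.Prime) {s : ZMod p} (hs : addOrderOf s = p) (t : ZMod p) :
    ∃ j : ℕ, j • s = t := by
  haveI := Fact.mk hp
  have hs0 : s ≠ 0 := s_ne_zero hp hs
  refine ⟨(t * s⁻¹).val, ?_⟩
  rw [nsmul_eq_mul, ZMod.natCast_val, ZMod.cast_id, mul_assoc, inv_mul_cancel₀ hs0, mul_one]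

/-- `ρ(g) x - x` is always in the range of `ρ(s) - 1`. -/
lemma sub_mem_range (hp : p.Prime) {s : ZMod p} (hs : addOrderOf s = p)
    (g : Multiplicative (ZMod p)) (x : Fin n → ℤ) :
    (ρ g : Matrix (Fin n) (Fin n) ℤ).mulVec x - x ∈ LinearMap.range
      (Matrix.mulVecLin ((ρ (ofAdd s) : Matrix (Fin n) (Fin n) ℤ) - 1)) := by
  set A := (ρ (ofAdd s) : Matrix (Fin n) (Fin n) ℤ) with hA
  have key : ∀ (j : ℕ) (y : Fin n → ℤ), (A ^ j).mulVec y - y ∈ LinearMap.range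
      (Matrix.mulVecLin (A - 1)) := by
    intro j
    induction j with
    | zero => intro y; simp
    | succ j ih =>
      intro y
      have hdecomp : (A ^ (j + 1)).mulVec y - y =
          ((A ^ j).mulVec (A.mulVec y) - A.mulVec y) + ((A - 1).mulVec y) := by
        rw [Matrix.sub_mulVec, Matrix.one_mulVec, pow_succ, ← Matrix.mulVec_mulVec]
        abel
      rw [hdecomp]
      exact add_mem (ih _) ⟨y, rfl⟩
  obtain ⟨j, hj⟩ := exists_nsmul hp hs g.toAdd
  have hg : g = ofAdd s ^ j := by
    rw [← ofAdd_nsmul, hj]; rfl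
  have : (ρ g : Matrix (Fin n) (Fin n) ℤ) = A ^ j := by
    rw [hg, map_pow, Units.val_pow_eq_pow_val]
  rw [this]
  exact key j x


lemma eq_one_of_right_eq_one (P : Subgroup (Gamma ρ)) (hfin : Finite P) (x : Gamma ρ)
    (hx : x ∈ P) (h1 : x.right = 1) : x = 1 := by
  haveI := hfin
  have hkpos : 0 < orderOf x := by simpa using orderOf_pos (⟨x, hx⟩ : P)
  set k := orderOf x with hk
  have hxk : x ^ k = 1 := by
    exact pow_orderOf_eq_one x
  have hleftk : x.left ^ k = 1 := by
    rw [← left_pow_of_right_one x h1 k, hxk]; rfl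
  have hl0 : x.left.toAdd = 0 := by
    have h2 := congrArg Multiplicative.toAdd hleftk
    rw [toAdd_pow] at h2
    funext i
    have h3 : k • x.left.toAdd i = 0 := congrFun h2 i
    have h4 : (k : ℤ) * x.left.toAdd i = 0 := by
      rw [← h3]; simp [nsmul_eq_mul]
    rcases mul_eq_zero.mp h4 with h | h
    · exact absurd (by exact_mod_cast h) hkpos.ne'
    · exact h
  have := gamma_ext x 0 0 hl0 (by rw [h1]; rfl)
  rw [this]; rfl

end GammaAux

open GammaAux in
/-- The map sending the class of `u ∈ ℤⁿ` in `coker(ρ(s) - id)` to the conjugacy class of the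
cyclic subgroup of `Γ` generated by `(u, s)` is a well-defined bijection onto the set `𝒫` of
conjugacy classes of nontrivial finite subgroups of `Γ`: classes `[u]`, `[v]` agree in the
cokernel iff the corresponding subgroups are conjugate (well-definedness and injectivity),
and every nontrivial finite subgroup is conjugate to one in the image (surjectivity). -/
theorem coker_bijects_onto_conjugacy_classes (p n : ℕ) (hp : p.Prime) (hodd : Odd p)
    (hn : 0 < n)
    (ρ : Multiplicative (ZMod p) →* Matrix.GeneralLinearGroup (Fin n) ℤ)
    (hfree : ∀ g : Multiplicative (ZMod p), g ≠ 1 → ∀ v : Fin n → ℤ,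
      (ρ g : Matrix (Fin n) (Fin n) ℤ).mulVec v = v → v = 0)
    (s : ZMod p) (hs : addOrderOf s = p) :
    (∀ u v : Fin n → ℤ,
      u - v ∈ LinearMap.range
          (Matrix.mulVecLin ((ρ (Multiplicative.ofAdd s) : Matrix (Fin n) (Fin n) ℤ) - 1)) ↔
        ConjSub
          (Subgroup.zpowers (⟨Multiplicative.ofAdd u, Multiplicative.ofAdd s⟩ : Gamma ρ))
          (Subgroup.zpowers (⟨Multiplicative.ofAdd v, Multiplicative.ofAdd s⟩ : Gamma ρ))) ∧
    (∀ P : Subgroup (Gamma ρ), P ≠ ⊥ → Finite P →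
      ∃ u : Fin n → ℤ,
        ConjSub
          (Subgroup.zpowers (⟨Multiplicative.ofAdd u, Multiplicative.ofAdd s⟩ : Gamma ρ)) P) := by

  haveI := Fact.mk hp
  constructor
  · intro u v
    constructor
    · rintro ⟨w, hw⟩
      refine ⟨⟨ofAdd w, ofAdd 0⟩, ?_⟩
      rw [MonoidHom.map_zpowers]
      simp only [MulEquiv.coe_toMonoidHom]
      rw [conj_mk']
      have h1 : (ρ (ofAdd (0 : ZMod p)) : Matrix (Fin n) (Fin n) ℤ) = 1 := by
        simp
      rw [Matrix.mulVecLin_apply, Matrix.sub_mulVec, Matrix.one_mulVec] at hw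
      have hAw : (ρ (ofAdd s) : Matrix (Fin n) (Fin n) ℤ).mulVec w = u - v + w := by
        rw [← hw]; abel
      rw [h1, Matrix.one_mulVec, hAw, show w + u - (u - v + w) = v by abel]
    · rintro ⟨γ, hγ⟩
      have hmem : (MulAut.conj γ).toMonoidHom (⟨ofAdd u, ofAdd s⟩ : Gamma ρ) ∈
          Subgroup.zpowers (⟨ofAdd v, ofAdd s⟩ : Gamma ρ) := by
        rw [← hγ]
        exact Subgroup.mem_map_of_mem _ (Subgroup.mem_zpowers _)
      obtain ⟨k, hk⟩ := Subgroup.mem_zpowers_iff.mp hmem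
      obtain ⟨l, r⟩ := γ
      rw [show (⟨l, r⟩ : Gamma ρ) = ⟨ofAdd l.toAdd, ofAdd r.toAdd⟩ from rfl] at hk
      simp only [MulEquiv.coe_toMonoidHom] at hk
      rw [conj_mk'] at hk
      have hr := congrArg SemidirectProduct.right hk
      rw [right_zpow] at hr
      have hks : k • s = s := by
        have := congrArg Multiplicative.toAdd hr
        simpa [toAdd_zpow] using this
      have hdvd : ((p : ℕ) : ℤ) ∣ (k - 1) := by
        rw [← hs]
        rw [addOrderOf_dvd_iff_zsmul_eq_zero, sub_zsmul, one_zsmul, hks]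
        simp
      obtain ⟨m, hm⟩ := hdvd
      have hk1 : k = (p : ℤ) * m + 1 := by linarith
      have hxv : (⟨ofAdd v, ofAdd s⟩ : Gamma ρ) ^ k = ⟨ofAdd v, ofAdd s⟩ := by
        rw [hk1, zpow_add, zpow_one, zpow_mul, zpow_natCast,
          elem_pow_p hp hfree hs v, one_zpow, one_mul]
      rw [hxv] at hk
      have hleft : v = l.toAdd + (ρ (ofAdd r.toAdd) : Matrix (Fin n) (Fin n) ℤ).mulVec u
          - (ρ (ofAdd s) : Matrix (Fin n) (Fin n) ℤ).mulVec l.toAdd := by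
        have := congrArg (fun z => (SemidirectProduct.left z).toAdd) hk
        simpa using this
      have h1 : (ρ (ofAdd r.toAdd) : Matrix (Fin n) (Fin n) ℤ).mulVec u - u ∈
          LinearMap.range (Matrix.mulVecLin
            ((ρ (ofAdd s) : Matrix (Fin n) (Fin n) ℤ) - 1)) :=
        sub_mem_range hp hs _ u
      have h2 : (Matrix.mulVecLin ((ρ (ofAdd s) : Matrix (Fin n) (Fin n) ℤ) - 1)) l.toAdd ∈
          LinearMap.range (Matrix.mulVecLin
            ((ρ (ofAdd s) : Matrix (Fin n) (Fin n) ℤ) - 1)) := ⟨l.toAdd, rfl⟩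
      have key : u - v = (Matrix.mulVecLin ((ρ (ofAdd s) : Matrix (Fin n) (Fin n) ℤ) - 1)) l.toAdd
          - ((ρ (ofAdd r.toAdd) : Matrix (Fin n) (Fin n) ℤ).mulVec u - u) := by
        rw [hleft, Matrix.mulVecLin_apply, Matrix.sub_mulVec, Matrix.one_mulVec]
        abel
      rw [key]
      exact sub_mem h2 h1
  · intro P hPbot hPfin
    have hcard : Nat.card (Multiplicative (ZMod p)) = p := by
      rw [Nat.card_congr Multiplicative.toAdd, Nat.card_zmod]
    set Q := P.map (SemidirectProduct.rightHom (φ := matAutHom ρ)) with hQdef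
    have hQd : Nat.card Q ∣ p := by
      have h := Subgroup.card_subgroup_dvd_card Q
      rwa [hcard] at h
    have hrh : ∀ z : Gamma ρ, SemidirectProduct.rightHom (φ := matAutHom ρ) z = z.right :=
      fun z => congrFun SemidirectProduct.rightHom_eq_right z
    have hQbot : Q ≠ ⊥ := by
      intro hb
      apply hPbot
      rw [Subgroup.eq_bot_iff_forall]
      intro x hxP
      have hx : SemidirectProduct.rightHom (φ := matAutHom ρ) x ∈ Q :=
        Subgroup.mem_map_of_mem _ hxP
      rw [hb, Subgroup.mem_bot, hrh] at hx
      exact eq_one_of_right_eq_one P hPfin x hxP hx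
    have hQtop : Q = ⊤ := by
      rcases hp.eq_one_or_self_of_dvd _ hQd with h1 | hPc
      · exact absurd (Subgroup.card_eq_one.mp h1) hQbot
      · exact Subgroup.eq_top_of_card_eq _ (hPc.trans hcard.symm)
    have hsQ : ofAdd s ∈ Q := hQtop ▸ Subgroup.mem_top _
    obtain ⟨x, hxP, hxs⟩ := Subgroup.mem_map.mp hsQ
    rw [hrh] at hxs
    have hPz : Subgroup.zpowers x = P := by
      apply le_antisymm (Subgroup.zpowers_le.mpr hxP)
      intro y hyP
      obtain ⟨j, hj⟩ := exists_nsmul hp hs y.right.toAdd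
      have hyr : y.right = x.right ^ j := by
        rw [hxs, ← ofAdd_nsmul, hj]
        exact (ofAdd_toAdd y.right).symm
      have hz : y * (x ^ j)⁻¹ = 1 := by
        apply eq_one_of_right_eq_one P hPfin _ (mul_mem hyP (inv_mem (pow_mem hxP j)))
        rw [SemidirectProduct.mul_right, SemidirectProduct.inv_right, right_pow, hyr,
          mul_inv_cancel]
      have : y = x ^ j := by rwa [mul_inv_eq_one] at hz
      rw [this]
      exact pow_mem (Subgroup.mem_zpowers x) j
    refine ⟨x.left.toAdd, 1, ?_⟩
    have hx_eq : (⟨ofAdd x.left.toAdd, ofAdd s⟩ : Gamma ρ) = x :=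
      (gamma_ext x _ _ rfl (by rw [hxs]; rfl)).symm
    rw [MonoidHom.map_zpowers]
    have hconj1 : (MulAut.conj (1 : Gamma ρ)).toMonoidHom
        (⟨ofAdd x.left.toAdd, ofAdd s⟩ : Gamma ρ) = x := by
      simp only [MulEquiv.coe_toMonoidHom, MulAut.conj_apply, one_mul, inv_one, mul_one]
      exact hx_eq
    rw [hconj1, hPz]
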